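/- arXiv:2010.02493 — 6 statements merged into one kernel-verified Lean document; each statement's English description precedes it below -/
import Mathlib

section
/- Let X and Y be finite-dimensional real Hilbert spaces, K ⊆ Y a closed convex cone, and g : X → Y a continuous map such that the set {(x,y) ∈ X × Y : g(x) + y ∈ K} is convex. Then the function θ : X → ℝ defined by θ(x) = (1/2)·(dist(g(x), K))², where dist(v,K) = inf{‖v − w‖ : w ∈ K}, is a convex function on X. -/
/-- If `K ⊆ Y` is a closed convex cone, `g : X → Y` is continuous and the set
`{(x,y) : g(x) + y ∈ K}` is convex, then `θ(x) = (1/2)·dist(g(x),K)²` is convex. -/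
theorem infeasibilityMeasure_convex
    {X Y : Type*}
    [NormedAddCommGroup X] [InnerProductSpace ℝ X] [FiniteDimensional ℝ X]
    [NormedAddCommGroup Y] [InnerProductSpace ℝ Y] [FiniteDimensional ℝ Y]
    (K : Set Y) (hKclosed : IsClosed K) (hKconvex : Convex ℝ K)
    (hKcone : ∀ (c : ℝ), 0 ≤ c → ∀ y ∈ K, c • y ∈ K)
    (g : X → Y) (hg : Continuous g)
    (hgraph : Convex ℝ {p : X × Y | g p.1 + p.2 ∈ K}) :
    ConvexOn ℝ Set.univ (fun x : X => (1 / 2 : ℝ) * Metric.infDist (g x) K ^ 2) := by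
  rcases K.eq_empty_or_nonempty with hK | hK
  · subst hK
    simp only [Metric.infDist_empty]
    norm_num
    exact convexOn_const _ convex_univ
  refine ⟨convex_univ, ?_⟩
  intro x₁ _ x₂ _ a b ha hb hab
  obtain ⟨w₁, hw₁K, hw₁⟩ := hKclosed.exists_infDist_eq_dist hK (g x₁)
  obtain ⟨w₂, hw₂K, hw₂⟩ := hKclosed.exists_infDist_eq_dist hK (g x₂)
  set z₁ : Y := w₁ - g x₁ with hz₁
  set z₂ : Y := w₂ - g x₂ with hz₂
  have h₁ : ((x₁, z₁) : X × Y) ∈ {p : X × Y | g p.1 + p.2 ∈ K} := by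
    simp [hz₁, hw₁K]
  have h₂ : ((x₂, z₂) : X × Y) ∈ {p : X × Y | g p.1 + p.2 ∈ K} := by
    simp [hz₂, hw₂K]
  have hmem := hgraph h₁ h₂ ha hb hab
  simp only [Prod.smul_mk, Prod.mk_add_mk, Set.mem_setOf_eq] at hmem
  set d₁ := Metric.infDist (g x₁) K with hd₁
  set d₂ := Metric.infDist (g x₂) K with hd₂
  have hn₁ : ‖z₁‖ = d₁ := by
    rw [hw₁, dist_eq_norm, hz₁, ← norm_neg]; rw [neg_sub]
  have hn₂ : ‖z₂‖ = d₂ := by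
    rw [hw₂, dist_eq_norm, hz₂, ← norm_neg]; rw [neg_sub]
  have hle : Metric.infDist (g (a • x₁ + b • x₂)) K ≤ a * d₁ + b * d₂ := by
    have h0 : Metric.infDist (g (a • x₁ + b • x₂)) K
        ≤ dist (g (a • x₁ + b • x₂)) (g (a • x₁ + b • x₂) + (a • z₁ + b • z₂)) :=
      Metric.infDist_le_dist_of_mem hmem
    calc Metric.infDist (g (a • x₁ + b • x₂)) K
        ≤ ‖a • z₁ + b • z₂‖ := by
          rwa [dist_eq_norm, show g (a • x₁ + b • x₂) - (g (a • x₁ + b • x₂) + (a • z₁ + b • z₂))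
            = -(a • z₁ + b • z₂) by abel, norm_neg] at h0
      _ ≤ ‖a • z₁‖ + ‖b • z₂‖ := norm_add_le _ _
      _ = a * d₁ + b * d₂ := by
          rw [norm_smul, norm_smul, Real.norm_of_nonneg ha, Real.norm_of_nonneg hb, hn₁, hn₂]
  have hd₁0 : 0 ≤ d₁ := Metric.infDist_nonneg
  have hd₂0 : 0 ≤ d₂ := Metric.infDist_nonneg
  have hdl0 : 0 ≤ Metric.infDist (g (a • x₁ + b • x₂)) K := Metric.infDist_nonneg
  set dl := Metric.infDist (g (a • x₁ + b • x₂)) K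
  show (1/2 : ℝ) * dl ^ 2 ≤ a * ((1/2) * d₁ ^ 2) + b * ((1/2) * d₂ ^ 2)
  nlinarith [mul_nonneg (mul_nonneg ha hb) (sq_nonneg (d₁ - d₂)),
    mul_le_mul hle hle hdl0 (by linarith : (0:ℝ) ≤ a * d₁ + b * d₂), sq_nonneg dl]
end

section
/- Let ε > 0, ψ_ε(a,b) = a + b − √(a² + b² + 2ε²), and Θ(ε) = {(y,z) ∈ ℝᵖ × ℝᵖ : ψ_ε(yᵢ,zᵢ) = 0 for all i}. For every (y,z) ∈ Θ(ε), the tangent cone of Θ(ε) at (y,z) is T_{Θ(ε)}(y,z) = {(u,v) ∈ ℝᵖ × ℝᵖ : for each i, (1 − yᵢ/√(yᵢ² + zᵢ² + 2ε²))·uᵢ + (1 − zᵢ/√(yᵢ² + zᵢ² + 2ε²))·vᵢ = 0}, i.e., the kernel of the Jacobian of the map (y,z) ↦ (ψ_ε(yᵢ,zᵢ))_{i=1}^p at (y,z). -/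
open Filter Topology

/-- The (Bouligand) tangent cone of `C` at `x`: the set of directions `d` for which there
exist `tₖ ↓ 0` and `dₖ → d` with `x + tₖ • dₖ ∈ C` for all `k`. -/
def tangentConeAt' {E : Type*} [NormedAddCommGroup E] [NormedSpace ℝ E]
    (C : Set E) (x : E) : Set E :=
  {d | ∃ (t : ℕ → ℝ) (dk : ℕ → E), (∀ k, 0 < t k) ∧ Tendsto t atTop (𝓝 0) ∧
      Tendsto dk atTop (𝓝 d) ∧ ∀ k, x + t k • dk k ∈ C}

lemma psi_eq_iff {ε : ℝ} (hε : 0 < ε) (a b : ℝ) :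
    a + b - Real.sqrt (a ^ 2 + b ^ 2 + 2 * ε ^ 2) = 0 ↔ a * b = ε ^ 2 ∧ 0 < a ∧ 0 < b := by
  constructor
  · intro h
    have hrad : 0 < a ^ 2 + b ^ 2 + 2 * ε ^ 2 := by positivity
    have hs : Real.sqrt (a ^ 2 + b ^ 2 + 2 * ε ^ 2) = a + b := by linarith
    have hpos := Real.sqrt_pos.mpr hrad
    rw [hs] at hpos
    have hsq := Real.sq_sqrt hrad.le
    rw [hs] at hsq
    have hprod : a * b = ε ^ 2 := by nlinarith
    refine ⟨hprod, ?_, ?_⟩ <;> nlinarith [sq_nonneg a, sq_nonneg b, mul_pos hε hε]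
  · rintro ⟨hab, ha, hb⟩
    have h2 : a ^ 2 + b ^ 2 + 2 * ε ^ 2 = (a + b) ^ 2 := by nlinarith
    rw [h2, Real.sqrt_sq (by linarith)]; ring

/-- the tangent cone of the smoothed complementarity set
`Θ(ε) = {(y,z) : ψ_ε(yᵢ,zᵢ) = 0 ∀ i}` at any of its points is the kernel of the Jacobian
of the smoothed Fischer–Burmeister map. -/
theorem tangentCone_smoothed_FB_set {p : ℕ} (ε : ℝ) (hε : 0 < ε)
    (y z : Fin p → ℝ)
    (hyz : ∀ i, y i + z i - Real.sqrt (y i ^ 2 + z i ^ 2 + 2 * ε ^ 2) = 0) :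
    tangentConeAt'
        {w : (Fin p → ℝ) × (Fin p → ℝ) |
          ∀ i, w.1 i + w.2 i - Real.sqrt (w.1 i ^ 2 + w.2 i ^ 2 + 2 * ε ^ 2) = 0}
        (y, z) =
      {d : (Fin p → ℝ) × (Fin p → ℝ) | ∀ i,
        (1 - y i / Real.sqrt (y i ^ 2 + z i ^ 2 + 2 * ε ^ 2)) * d.1 i +
          (1 - z i / Real.sqrt (y i ^ 2 + z i ^ 2 + 2 * ε ^ 2)) * d.2 i = 0} := by
  have hkey : ∀ i, y i * z i = ε ^ 2 ∧ 0 < y i ∧ 0 < z i :=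
    fun i => (psi_eq_iff hε _ _).mp (hyz i)
  have s_def : ∀ i, Real.sqrt (y i ^ 2 + z i ^ 2 + 2 * ε ^ 2) = y i + z i := by
    intro i; linarith [hyz i]
  ext d
  simp only [tangentConeAt', Set.mem_setOf_eq]
  constructor
  · rintro ⟨t, dk, htpos, ht0, hdk, hmem⟩ i
    obtain ⟨hprod, hy, hz⟩ := hkey i
    have hseq : ∀ k, z i * (dk k).1 i + y i * (dk k).2 i
        + t k * ((dk k).1 i * (dk k).2 i) = 0 := by
      intro k
      have h := hmem k i
      simp only [Prod.fst_add, Prod.snd_add, Prod.smul_fst, Prod.smul_snd,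
        Pi.add_apply, Pi.smul_apply, smul_eq_mul] at h
      have h2 := ((psi_eq_iff hε _ _).mp h).1
      have hexp : t k * (z i * (dk k).1 i + y i * (dk k).2 i
          + t k * ((dk k).1 i * (dk k).2 i)) = 0 := by linear_combination h2 - hprod
      exact (mul_eq_zero.mp hexp).resolve_left (htpos k).ne'
    have hu : Tendsto (fun k => (dk k).1 i) atTop (𝓝 (d.1 i)) :=
      (((continuous_apply i).comp continuous_fst).tendsto d).comp hdk
    have hv : Tendsto (fun k => (dk k).2 i) atTop (𝓝 (d.2 i)) :=
      (((continuous_apply i).comp continuous_snd).tendsto d).comp hdk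
    have hlim : Tendsto (fun k => z i * (dk k).1 i + y i * (dk k).2 i
        + t k * ((dk k).1 i * (dk k).2 i)) atTop
        (𝓝 (z i * d.1 i + y i * d.2 i + 0 * (d.1 i * d.2 i))) :=
      ((tendsto_const_nhds.mul hu).add (tendsto_const_nhds.mul hv)).add
        (ht0.mul (hu.mul hv))
    have hfun : (fun k => z i * (dk k).1 i + y i * (dk k).2 i
        + t k * ((dk k).1 i * (dk k).2 i)) = fun _ => (0 : ℝ) := funext hseq
    rw [hfun] at hlim
    have h0 : z i * d.1 i + y i * d.2 i + 0 * (d.1 i * d.2 i) = 0 :=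
      (tendsto_nhds_unique tendsto_const_nhds hlim).symm
    rw [s_def i]
    have hs : 0 < y i + z i := by linarith
    field_simp
    linarith [h0]
  · intro hd
    have hker : ∀ i, z i * d.1 i + y i * d.2 i = 0 := by
      intro i
      have h := hd i
      rw [s_def i] at h
      obtain ⟨hprod, hy, hz⟩ := hkey i
      have hs : 0 < y i + z i := by linarith
      field_simp at h
      linarith [h]
    obtain ⟨c, hc, hcy⟩ : ∃ c > 0, ∀ i, c * (|d.1 i| + 1) ≤ y i := by
      rcases isEmpty_or_nonempty (Fin p) with hpe | hpn
      · exact ⟨1, one_pos, fun i => isEmptyElim i⟩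
      · obtain ⟨i₀, -, hi₀⟩ := Finset.exists_min_image Finset.univ
          (fun i => y i / (|d.1 i| + 1)) ⟨Classical.arbitrary _, Finset.mem_univ _⟩
        have hy0 := (hkey i₀).2.1
        refine ⟨y i₀ / (|d.1 i₀| + 1), by positivity, fun i => ?_⟩
        have h1 : y i₀ / (|d.1 i₀| + 1) ≤ y i / (|d.1 i| + 1) := hi₀ i (Finset.mem_univ i)
        have h2 : (0:ℝ) < |d.1 i| + 1 := by positivity
        calc y i₀ / (|d.1 i₀| + 1) * (|d.1 i| + 1)
            ≤ y i / (|d.1 i| + 1) * (|d.1 i| + 1) := by nlinarith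
          _ = y i := by field_simp
    set t : ℕ → ℝ := fun k => c / (k + 1) with ht_def
    have htpos : ∀ k, 0 < t k := fun k => by positivity
    have htle : ∀ k, t k ≤ c := by
      intro k
      apply div_le_self hc.le
      have : (0:ℝ) ≤ (k:ℝ) := Nat.cast_nonneg k
      linarith
    have ht0 : Tendsto t atTop (𝓝 0) := by
      have h3 := (tendsto_const_div_atTop_nhds_zero_nat c).comp (tendsto_add_atTop_nat 1)
      have he : t = (fun n : ℕ => c / (n : ℝ)) ∘ (fun k => k + 1) := by
        funext k; simp [ht_def, Function.comp]
      rw [he]; exact h3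
    have hapos : ∀ k i, 0 < y i + t k * d.1 i := by
      intro k i
      have h1 : t k * |d.1 i| ≤ c * |d.1 i| := mul_le_mul_of_nonneg_right (htle k) (abs_nonneg _)
      have h2 : c * |d.1 i| < c * (|d.1 i| + 1) := by nlinarith
      have h4 := hcy i
      have h5 : -(t k * |d.1 i|) ≤ t k * d.1 i := by
        have := neg_abs_le (t k * d.1 i)
        rwa [abs_mul, abs_of_pos (htpos k)] at this
      linarith
    refine ⟨t, fun k => (d.1, fun i => -(z i * d.1 i) / (y i + t k * d.1 i)), htpos, ht0, ?_, ?_⟩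
    · have h2 : Tendsto (fun k => (fun i => -(z i * d.1 i) / (y i + t k * d.1 i)))
          atTop (𝓝 d.2) := by
        rw [tendsto_pi_nhds]
        intro i
        obtain ⟨hprod, hy, hz⟩ := hkey i
        have hv : d.2 i = -(z i * d.1 i) / y i := by
          rw [eq_div_iff hy.ne']
          linarith [hker i]
        rw [hv]
        have hden : Tendsto (fun k => y i + t k * d.1 i) atTop (𝓝 (y i)) := by
          have h := (tendsto_const_nhds : Tendsto (fun _ : ℕ => y i) atTop
            (𝓝 (y i))).add (ht0.mul_const (d.1 i))
          simpa using h
        exact Tendsto.div tendsto_const_nhds hden hy.ne'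
      have := (tendsto_const_nhds : Tendsto (fun _ : ℕ => d.1) atTop (𝓝 d.1)).prodMk_nhds h2
      simpa using this
    · intro k
      simp only [Set.mem_setOf_eq, Prod.fst_add, Prod.snd_add, Prod.smul_fst, Prod.smul_snd,
        Pi.add_apply, Pi.smul_apply, smul_eq_mul]
      intro i
      obtain ⟨hprod, hy, hz⟩ := hkey i
      have ha := hapos k i
      rw [psi_eq_iff hε]
      have h0 : -(z i * d.1 i) / (y i + t k * d.1 i) * (y i + t k * d.1 i)
          = -(z i * d.1 i) := div_mul_cancel₀ _ ha.ne'
      have hb : (z i + t k * (-(z i * d.1 i) / (y i + t k * d.1 i))) * (y i + t k * d.1 i)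
          = ε ^ 2 := by
        calc (z i + t k * (-(z i * d.1 i) / (y i + t k * d.1 i))) * (y i + t k * d.1 i)
            = z i * (y i + t k * d.1 i)
              + t k * (-(z i * d.1 i) / (y i + t k * d.1 i) * (y i + t k * d.1 i)) := by ring
          _ = z i * (y i + t k * d.1 i) + t k * (-(z i * d.1 i)) := by rw [h0]
          _ = ε ^ 2 := by linear_combination hprod
      have hbpos : 0 < z i + t k * (-(z i * d.1 i) / (y i + t k * d.1 i)) := by
        nlinarith [mul_pos hε hε, sq_nonneg ε]
      exact ⟨by linear_combination hb, ha, hbpos⟩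
end

section
/- Let ψ_ε(a,b) = a + b − √(a² + b² + 2ε²), Θ(ε) = {(y,z) ∈ ℝᵖ × ℝᵖ : ψ_ε(yᵢ,zᵢ) = 0 for all i}, and Θ = Θ(0) = {(y,z) ∈ ℝᵖ × ℝᵖ : yᵢ ≥ 0, zᵢ ≥ 0, yᵢzᵢ = 0 for all i}. Then Θ(ε) converges to Θ as ε ↓ 0 in the Painlevé–Kuratowski sense; precisely: (i) for every sequence εₖ > 0 with εₖ → 0 and every sequence (yₖ, zₖ) ∈ Θ(εₖ) with (yₖ, zₖ) → (y, z), one has (y, z) ∈ Θ; and (ii) for every (y, z) ∈ Θ and every sequence εₖ > 0 with εₖ → 0, there exist (yₖ, zₖ) ∈ Θ(εₖ) with (yₖ, zₖ) → (y, z). -/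
open Filter Topology

lemma psi_zero_imp {a b ε : ℝ} (hε : 0 < ε)
    (h : a + b - Real.sqrt (a ^ 2 + b ^ 2 + 2 * ε ^ 2) = 0) :
    0 < a ∧ 0 < b ∧ a * b = ε ^ 2 := by
  have harg : (0:ℝ) ≤ a ^ 2 + b ^ 2 + 2 * ε ^ 2 := by positivity
  have heq : a + b = Real.sqrt (a ^ 2 + b ^ 2 + 2 * ε ^ 2) := by linarith
  have hsum : 0 ≤ a + b := heq ▸ Real.sqrt_nonneg _
  have hsq : (a + b) ^ 2 = a ^ 2 + b ^ 2 + 2 * ε ^ 2 := by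
    rw [heq, Real.sq_sqrt harg]
  have hab : a * b = ε ^ 2 := by nlinarith
  have hε2 : 0 < ε ^ 2 := by positivity
  have ha : 0 < a := by nlinarith
  have hb : 0 < b := by nlinarith
  exact ⟨ha, hb, hab⟩

lemma psi_zero_of {a b ε : ℝ} (hs : 0 ≤ a + b) (hab : a * b = ε ^ 2) :
    a + b - Real.sqrt (a ^ 2 + b ^ 2 + 2 * ε ^ 2) = 0 := by
  have : a ^ 2 + b ^ 2 + 2 * ε ^ 2 = (a + b) ^ 2 := by nlinarith
  rw [this, Real.sqrt_sq hs]; ring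

/-- Painlevé–Kuratowski convergence of the smoothed complementarity sets
`Θ(ε) = {(y,z) : ψ_ε(yᵢ,zᵢ) = 0 ∀ i}` to the complementarity set
`Θ = {(y,z) : yᵢ ≥ 0, zᵢ ≥ 0, yᵢzᵢ = 0 ∀ i}` as `ε ↓ 0`. -/
theorem smoothed_FB_set_converges {p : ℕ}
    (Θε : ℝ → Set ((Fin p → ℝ) × (Fin p → ℝ)))
    (hΘε : ∀ ε, Θε ε = {w : (Fin p → ℝ) × (Fin p → ℝ) |
        ∀ i, w.1 i + w.2 i - Real.sqrt (w.1 i ^ 2 + w.2 i ^ 2 + 2 * ε ^ 2) = 0})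
    (Θ : Set ((Fin p → ℝ) × (Fin p → ℝ)))
    (hΘ : Θ = {w : (Fin p → ℝ) × (Fin p → ℝ) |
        ∀ i, 0 ≤ w.1 i ∧ 0 ≤ w.2 i ∧ w.1 i * w.2 i = 0}) :
    -- (i) outer limit: limits of points of `Θ(εₖ)` lie in `Θ`
    (∀ (εk : ℕ → ℝ), (∀ k, 0 < εk k) → Tendsto εk atTop (𝓝 0) →
      ∀ (yk zk : ℕ → (Fin p → ℝ)) (y z : Fin p → ℝ),
        (∀ k, (yk k, zk k) ∈ Θε (εk k)) →
        Tendsto (fun k => (yk k, zk k)) atTop (𝓝 (y, z)) →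
        (y, z) ∈ Θ) ∧
    -- (ii) inner limit: every point of `Θ` is a limit of points of `Θ(εₖ)`
    (∀ (y z : Fin p → ℝ), (y, z) ∈ Θ →
      ∀ (εk : ℕ → ℝ), (∀ k, 0 < εk k) → Tendsto εk atTop (𝓝 0) →
        ∃ (yk zk : ℕ → (Fin p → ℝ)),
          (∀ k, (yk k, zk k) ∈ Θε (εk k)) ∧
          Tendsto (fun k => (yk k, zk k)) atTop (𝓝 (y, z))) := by
  constructor
  · -- outer limit
    intro εk hεpos hεlim yk zk y z hmem hlim
    rw [hΘ]
    intro i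
    -- componentwise facts at each k
    have key : ∀ k, 0 < yk k i ∧ 0 < zk k i ∧ yk k i * zk k i = εk k ^ 2 := by
      intro k
      have := hmem k
      rw [hΘε] at this
      exact psi_zero_imp (hεpos k) (this i)
    -- componentwise limits
    have hylim : Tendsto (fun k => yk k i) atTop (𝓝 (y i)) :=
      ((continuous_apply i).tendsto y).comp ((continuous_fst.tendsto (y, z)).comp hlim)
    have hzlim : Tendsto (fun k => zk k i) atTop (𝓝 (z i)) :=
      ((continuous_apply i).tendsto z).comp ((continuous_snd.tendsto (y, z)).comp hlim)
    have hy0 : 0 ≤ y i :=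
      le_of_tendsto_of_tendsto' tendsto_const_nhds hylim (fun k => (key k).1.le)
    have hz0 : 0 ≤ z i :=
      le_of_tendsto_of_tendsto' tendsto_const_nhds hzlim (fun k => (key k).2.1.le)
    have hprod : Tendsto (fun k => yk k i * zk k i) atTop (𝓝 (y i * z i)) :=
      hylim.mul hzlim
    have hε2 : Tendsto (fun k => εk k ^ 2) atTop (𝓝 0) := by
      have := hεlim.pow 2
      simpa using this
    have : Tendsto (fun k => yk k i * zk k i) atTop (𝓝 0) := by
      refine hε2.congr fun k => ?_
      exact ((key k).2.2).symm
    exact ⟨hy0, hz0, tendsto_nhds_unique hprod this⟩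
  · -- inner limit
    intro y z hyz εk hεpos hεlim
    rw [hΘ] at hyz
    refine ⟨fun k i => (y i - z i + Real.sqrt ((y i - z i) ^ 2 + 4 * εk k ^ 2)) / 2,
            fun k i => (z i - y i + Real.sqrt ((y i - z i) ^ 2 + 4 * εk k ^ 2)) / 2,
            ?_, ?_⟩
    · intro k
      rw [hΘε]
      intro i
      show (y i - z i + Real.sqrt ((y i - z i) ^ 2 + 4 * εk k ^ 2)) / 2
          + (z i - y i + Real.sqrt ((y i - z i) ^ 2 + 4 * εk k ^ 2)) / 2
          - Real.sqrt (((y i - z i + Real.sqrt ((y i - z i) ^ 2 + 4 * εk k ^ 2)) / 2) ^ 2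
            + ((z i - y i + Real.sqrt ((y i - z i) ^ 2 + 4 * εk k ^ 2)) / 2) ^ 2
            + 2 * εk k ^ 2) = 0
      have harg : (0:ℝ) ≤ (y i - z i) ^ 2 + 4 * εk k ^ 2 := by positivity
      have hsq : Real.sqrt ((y i - z i) ^ 2 + 4 * εk k ^ 2) ^ 2
          = (y i - z i) ^ 2 + 4 * εk k ^ 2 := Real.sq_sqrt harg
      have hnn := Real.sqrt_nonneg ((y i - z i) ^ 2 + 4 * εk k ^ 2)
      apply psi_zero_of
      · have : (y i - z i + Real.sqrt ((y i - z i) ^ 2 + 4 * εk k ^ 2)) / 2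
            + (z i - y i + Real.sqrt ((y i - z i) ^ 2 + 4 * εk k ^ 2)) / 2
            = Real.sqrt ((y i - z i) ^ 2 + 4 * εk k ^ 2) := by ring
        linarith
      · nlinarith
    · -- convergence
      have hlimy : ∀ i, Tendsto
          (fun k => (y i - z i + Real.sqrt ((y i - z i) ^ 2 + 4 * εk k ^ 2)) / 2)
          atTop (𝓝 (y i)) := by
        intro i
        obtain ⟨hy0, hz0, hmul⟩ := hyz i
        replace hy0 : 0 ≤ y i := hy0
        replace hz0 : 0 ≤ z i := hz0
        replace hmul : y i * z i = 0 := hmul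
        have hcont : Tendsto (fun t : ℝ =>
            (y i - z i + Real.sqrt ((y i - z i) ^ 2 + 4 * t ^ 2)) / 2) (𝓝 0)
            (𝓝 ((y i - z i + Real.sqrt ((y i - z i) ^ 2 + 4 * (0:ℝ) ^ 2)) / 2)) := by
          apply Continuous.tendsto
          continuity
        have hval : (y i - z i + Real.sqrt ((y i - z i) ^ 2 + 4 * (0:ℝ) ^ 2)) / 2 = y i := by
          have : (y i - z i) ^ 2 + 4 * (0:ℝ) ^ 2 = (y i - z i) ^ 2 := by ring
          rw [this, Real.sqrt_sq_eq_abs]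
          rcases mul_eq_zero.mp hmul with h | h
          · rw [h, abs_of_nonpos (by linarith : 0 - z i ≤ 0)]; ring
          · rw [h, abs_of_nonneg (by linarith : 0 ≤ y i - 0)]; ring
        rw [hval] at hcont
        exact hcont.comp hεlim
      have hlimz : ∀ i, Tendsto
          (fun k => (z i - y i + Real.sqrt ((y i - z i) ^ 2 + 4 * εk k ^ 2)) / 2)
          atTop (𝓝 (z i)) := by
        intro i
        obtain ⟨hy0, hz0, hmul⟩ := hyz i
        replace hy0 : 0 ≤ y i := hy0
        replace hz0 : 0 ≤ z i := hz0
        replace hmul : y i * z i = 0 := hmul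
        have hcont : Tendsto (fun t : ℝ =>
            (z i - y i + Real.sqrt ((y i - z i) ^ 2 + 4 * t ^ 2)) / 2) (𝓝 0)
            (𝓝 ((z i - y i + Real.sqrt ((y i - z i) ^ 2 + 4 * (0:ℝ) ^ 2)) / 2)) := by
          apply Continuous.tendsto
          continuity
        have hval : (z i - y i + Real.sqrt ((y i - z i) ^ 2 + 4 * (0:ℝ) ^ 2)) / 2 = z i := by
          have : (y i - z i) ^ 2 + 4 * (0:ℝ) ^ 2 = (y i - z i) ^ 2 := by ring
          rw [this, Real.sqrt_sq_eq_abs]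
          rcases mul_eq_zero.mp hmul with h | h
          · rw [h, abs_of_nonpos (by linarith : 0 - z i ≤ 0)]; ring
          · rw [h, abs_of_nonneg (by linarith : 0 ≤ y i - 0)]; ring
        rw [hval] at hcont
        exact hcont.comp hεlim
      apply Tendsto.prodMk_nhds
      · rw [tendsto_pi_nhds]; exact hlimy
      · rw [tendsto_pi_nhds]; exact hlimz
end

section
/- Let A ∈ ℝ^{q×n}, b ∈ ℝ^q, c : ℝⁿ → ℝᵖ continuously differentiable. Define G(x, y, z^I) = (Aᵀy^E + Jc(x)ᵀy^I, Ax − b + y^E, c(x) + y^I − z^I), ψ_ε(a,b) = a + b − √(a² + b² + 2ε²), Θ(ε) = {(y^I, z^I) ∈ ℝᵖ × ℝᵖ : ψ_ε(y^I_i, z^I_i) = 0 for all i}, and Φ(ε) = {(x, y, z^I) : G(x,y,z^I) = 0, (y^I, z^I) ∈ Θ(ε)}. Then Φ(ε) is outer semicontinuous at ε = 0: for every sequence εₖ > 0 with εₖ → 0 and every sequence (xₖ, yₖ, z^I_ₖ) ∈ Φ(εₖ) converging to (x*, y*, z^I*), one has G(x*, y*, z^I*) = 0 and ((y^I)*, (z^I)*)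 ∈ Θ, i.e., (x*, y*, z^I*) ∈ Φ(0). -/
open Filter Topology Matrix

/-- outer semicontinuity at `ε = 0` of the feasible sets
`Φ(ε) = {(x,y,z^I) : G(x,y,z^I) = 0, (y^I,z^I) ∈ Θ(ε)}` of the smoothed problems.
A point of the ambient space is written `(x, (yE, yI), zI)`. -/
theorem smoothed_feasible_set_outer_semicontinuous
    {n q p : ℕ} (A : Matrix (Fin q) (Fin n) ℝ) (b : Fin q → ℝ)
    (c : (Fin n → ℝ) → (Fin p → ℝ)) (hc : ContDiff ℝ 1 c)
    -- `Jc x` is the Jacobian of `c` at `x`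
    (Jc : (Fin n → ℝ) → Matrix (Fin p) (Fin n) ℝ)
    (hJc : ∀ x v, fderiv ℝ c x v = Jc x *ᵥ v)
    (G : (Fin n → ℝ) × ((Fin q → ℝ) × (Fin p → ℝ)) × (Fin p → ℝ) →
        (Fin n → ℝ) × (Fin q → ℝ) × (Fin p → ℝ))
    (hG : ∀ w, G w = (Aᵀ *ᵥ w.2.1.1 + (Jc w.1)ᵀ *ᵥ w.2.1.2,
        A *ᵥ w.1 - b + w.2.1.1,
        c w.1 + w.2.1.2 - w.2.2))
    (Φε : ℝ → Set ((Fin n → ℝ) × ((Fin q → ℝ) × (Fin p → ℝ)) × (Fin p → ℝ)))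
    (hΦε : ∀ ε, Φε ε = {w | G w = 0 ∧
        ∀ i, w.2.1.2 i + w.2.2 i -
          Real.sqrt (w.2.1.2 i ^ 2 + w.2.2 i ^ 2 + 2 * ε ^ 2) = 0})
    (εk : ℕ → ℝ) (hεk : ∀ k, 0 < εk k) (hεk0 : Tendsto εk atTop (𝓝 0))
    (wk : ℕ → (Fin n → ℝ) × ((Fin q → ℝ) × (Fin p → ℝ)) × (Fin p → ℝ))
    (hwk : ∀ k, wk k ∈ Φε (εk k))
    (w : (Fin n → ℝ) × ((Fin q → ℝ) × (Fin p → ℝ)) × (Fin p → ℝ))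
    (hlim : Tendsto wk atTop (𝓝 w)) :
    G w = 0 ∧ ∀ i, 0 ≤ w.2.1.2 i ∧ 0 ≤ w.2.2 i ∧ w.2.1.2 i * w.2.2 i = 0 :=  by
  have hk : ∀ k, G (wk k) = 0 ∧
      ∀ i, (wk k).2.1.2 i + (wk k).2.2 i -
        Real.sqrt ((wk k).2.1.2 i ^ 2 + (wk k).2.2 i ^ 2 + 2 * εk k ^ 2) = 0 := by
    intro k
    have := hwk k
    rw [hΦε] at this
    exact this
  have hJent : ∀ x i j, Jc x i j = fderiv ℝ c x (Pi.single j 1) i := by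
    intro x i j
    have := congrFun (hJc x (Pi.single j 1)) i
    rw [this]
    simp [Matrix.mulVec, dotProduct, Pi.single_apply]
  have hJcont : Continuous fun x => Jc x := by
    apply continuous_matrix
    intro i j
    simp only [hJent]
    exact (continuous_apply i).comp
      ((hc.continuous_fderiv one_ne_zero).clm_apply continuous_const)
  have hx : Continuous fun w : (Fin n → ℝ) × ((Fin q → ℝ) × (Fin p → ℝ)) × (Fin p → ℝ) =>
      w.1 := continuous_fst
  have hyE : Continuous fun w : (Fin n → ℝ) × ((Fin q → ℝ) × (Fin p → ℝ)) × (Fin p → ℝ) =>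
      w.2.1.1 := continuous_fst.comp (continuous_fst.comp continuous_snd)
  have hyI : Continuous fun w : (Fin n → ℝ) × ((Fin q → ℝ) × (Fin p → ℝ)) × (Fin p → ℝ) =>
      w.2.1.2 := continuous_snd.comp (continuous_fst.comp continuous_snd)
  have hzI : Continuous fun w : (Fin n → ℝ) × ((Fin q → ℝ) × (Fin p → ℝ)) × (Fin p → ℝ) =>
      w.2.2 := continuous_snd.comp continuous_snd
  have hGcont : Continuous G := by
    have hGfun : G = fun w => (Aᵀ *ᵥ w.2.1.1 + (Jc w.1)ᵀ *ᵥ w.2.1.2,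
        A *ᵥ w.1 - b + w.2.1.1, c w.1 + w.2.1.2 - w.2.2) := funext hG
    rw [hGfun]
    refine Continuous.prodMk ?_ (Continuous.prodMk ?_ ?_)
    · exact ((continuous_const.matrix_mulVec hyE).add
        (((hJcont.comp hx).matrix_transpose).matrix_mulVec hyI))
    · exact ((continuous_const.matrix_mulVec hx).sub continuous_const).add hyE
    · exact ((hc.continuous.comp hx).add hyI).sub hzI
  constructor
  · have h1 : Tendsto (fun k => G (wk k)) atTop (𝓝 (G w)) :=
      (hGcont.tendsto w).comp hlim
    have h2 : Tendsto (fun k => G (wk k)) atTop (𝓝 0) := by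
      simp only [fun k => (hk k).1]
      exact tendsto_const_nhds
    exact tendsto_nhds_unique h1 h2
  · intro i
    set a := w.2.1.2 i with ha_def
    set b' := w.2.2 i with hb_def
    have hta : Tendsto (fun k => (wk k).2.1.2 i) atTop (𝓝 a) :=
      (((continuous_apply i).comp hyI).tendsto w).comp hlim
    have htb : Tendsto (fun k => (wk k).2.2 i) atTop (𝓝 b') :=
      (((continuous_apply i).comp hzI).tendsto w).comp hlim
    have htin : Tendsto (fun k => (wk k).2.1.2 i ^ 2 + (wk k).2.2 i ^ 2 + 2 * εk k ^ 2)
        atTop (𝓝 (a ^ 2 + b' ^ 2 + 2 * 0 ^ 2)) :=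
      ((hta.pow 2).add (htb.pow 2)).add (tendsto_const_nhds.mul (hεk0.pow 2))
    have htall : Tendsto (fun k => (wk k).2.1.2 i + (wk k).2.2 i -
        Real.sqrt ((wk k).2.1.2 i ^ 2 + (wk k).2.2 i ^ 2 + 2 * εk k ^ 2))
        atTop (𝓝 (a + b' - Real.sqrt (a ^ 2 + b' ^ 2 + 2 * 0 ^ 2))) :=
      (hta.add htb).sub htin.sqrt
    have ht0 : Tendsto (fun k => (wk k).2.1.2 i + (wk k).2.2 i -
        Real.sqrt ((wk k).2.1.2 i ^ 2 + (wk k).2.2 i ^ 2 + 2 * εk k ^ 2))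
        atTop (𝓝 0) := by
      simp only [fun k => (hk k).2 i]
      exact tendsto_const_nhds
    have heq0 : a + b' - Real.sqrt (a ^ 2 + b' ^ 2 + 2 * 0 ^ 2) = 0 :=
      tendsto_nhds_unique htall ht0
    have heq : a + b' = Real.sqrt (a ^ 2 + b' ^ 2) := by
      have : (2 : ℝ) * 0 ^ 2 = 0 := by ring
      rw [this, add_zero] at heq0
      linarith
    have hnn : 0 ≤ a + b' := heq ▸ Real.sqrt_nonneg _
    have hsq : (a + b') ^ 2 = a ^ 2 + b' ^ 2 := by
      rw [heq]
      exact Real.sq_sqrt (by positivity)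
    have hab : a * b' = 0 := by nlinarith
    rcases mul_eq_zero.mp hab with h | h
    · exact ⟨le_of_eq h.symm, by linarith, hab⟩
    · exact ⟨by linarith, le_of_eq h.symm, hab⟩
end

section
/- Let M ∈ ℝ^{n×n}, A ∈ ℝ^{q×n}, C ∈ ℝ^{p×n}, and D_y, D_z ∈ ℝ^{p×p} with D_y + D_z = I_p. If the matrix M − AᵀA − CᵀD_zC is invertible, then the (n+q+2p) × (n+q+2p) block matrix [[M, Aᵀ, Cᵀ, 0], [A, I_q, 0, 0], [C, 0, I_p, −I_p], [0, 0, D_y, D_z]] has full row rank (equivalently, it is invertible). -/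
open Matrix

/-- if `D_y + D_z = I` and `M − AᵀA − CᵀD_zC` is invertible, then the block
matrix `[[M, Aᵀ, Cᵀ, 0], [A, I, 0, 0], [C, 0, I, −I], [0, 0, D_y, D_z]]`, viewed as the
linear map `(ξ₁,ξ₂,ξ₃,ξ₄) ↦ (Mξ₁ + Aᵀξ₂ + Cᵀξ₃, Aξ₁ + ξ₂, Cξ₁ + ξ₃ − ξ₄, D_yξ₃ + D_zξ₄)`,
has full row rank, i.e. it is surjective — equivalently (being square) it is bijective. -/
theorem smoothed_jacobian_full_rank
    {n q p : ℕ} (M : Matrix (Fin n) (Fin n) ℝ) (A : Matrix (Fin q) (Fin n) ℝ)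
    (C : Matrix (Fin p) (Fin n) ℝ) (Dy Dz : Matrix (Fin p) (Fin p) ℝ)
    (hD : Dy + Dz = 1)
    (hinv : IsUnit (M - Aᵀ * A - Cᵀ * Dz * C))
    (L : (Fin n → ℝ) × (Fin q → ℝ) × (Fin p → ℝ) × (Fin p → ℝ) →
        (Fin n → ℝ) × (Fin q → ℝ) × (Fin p → ℝ) × (Fin p → ℝ))
    (hL : ∀ ξ, L ξ = (M *ᵥ ξ.1 + Aᵀ *ᵥ ξ.2.1 + Cᵀ *ᵥ ξ.2.2.1,
        A *ᵥ ξ.1 + ξ.2.1,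
        C *ᵥ ξ.1 + ξ.2.2.1 - ξ.2.2.2,
        Dy *ᵥ ξ.2.2.1 + Dz *ᵥ ξ.2.2.2)) :
    Function.Surjective L ∧ Function.Bijective L := by
  obtain ⟨u, hu⟩ := hinv
  set N : Matrix (Fin n) (Fin n) ℝ := M - Aᵀ * A - Cᵀ * Dz * C with hN
  have hM : M = N + Aᵀ * A + Cᵀ * Dz * C := by rw [hN]; abel
  have hDy : Dy = 1 - Dz := by rw [← hD]; abel
  set Ninv : Matrix (Fin n) (Fin n) ℝ := ↑u⁻¹ with hNinv
  have h1 : N * Ninv = 1 := by rw [hNinv, ← hu]; exact_mod_cast u.mul_inv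
  have h2 : Ninv * N = 1 := by rw [hNinv, ← hu]; exact_mod_cast u.inv_mul
  set g : (Fin n → ℝ) × (Fin q → ℝ) × (Fin p → ℝ) × (Fin p → ℝ) →
      (Fin n → ℝ) × (Fin q → ℝ) × (Fin p → ℝ) × (Fin p → ℝ) := fun b =>
    let x := Ninv *ᵥ (b.1 - Aᵀ *ᵥ b.2.1 - Cᵀ *ᵥ (b.2.2.2 + Dz *ᵥ b.2.2.1))
    (x, b.2.1 - A *ᵥ x,
      b.2.2.2 + Dz *ᵥ b.2.2.1 - (Dz * C) *ᵥ x,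
      C *ᵥ x + (b.2.2.2 + Dz *ᵥ b.2.2.1 - (Dz * C) *ᵥ x) - b.2.2.1) with hg
  have hright : Function.RightInverse g L := by
    intro b
    obtain ⟨b1, b2, b3, b4⟩ := b
    simp only [hL, hg]
    refine Prod.ext ?_ (Prod.ext ?_ (Prod.ext ?_ ?_)) <;>
      simp only [hM, hDy, mulVec_add, mulVec_sub, add_mulVec, sub_mulVec,
        Matrix.add_mul, Matrix.mul_add, Matrix.sub_mul, Matrix.mul_sub, Matrix.one_mul, Matrix.mul_one, mulVec_mulVec, one_mulVec, ← Matrix.mul_assoc, h1] <;> abel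
  have hleft : Function.LeftInverse g L := by
    intro ξ
    obtain ⟨x, y, z, w⟩ := ξ
    simp only [hL, hg]
    refine Prod.ext ?_ (Prod.ext ?_ (Prod.ext ?_ ?_)) <;>
      simp only [hM, hDy, mulVec_add, mulVec_sub, add_mulVec, sub_mulVec,
        Matrix.add_mul, Matrix.mul_add, Matrix.sub_mul, Matrix.mul_sub, Matrix.one_mul, Matrix.mul_one, mulVec_mulVec, one_mulVec, ← Matrix.mul_assoc, h2] <;> abel
  have hbij : Function.Bijective L := ⟨hleft.injective, hright.surjective⟩
  exact ⟨hbij.2, hbij⟩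
end

section
/- Let A ∈ ℝ^{q×n}, b ∈ ℝ^q, c : ℝⁿ → ℝᵖ twice continuously differentiable, f : ℝⁿ → ℝ continuously differentiable. Let εₖ > 0 with εₖ → 0, and for each k let (xₖ, yₖ, z^I_ₖ, λₖ) ∈ ℝⁿ × (ℝ^q × ℝᵖ) × ℝᵖ × ℝⁿ satisfy: G(xₖ, yₖ, z^I_ₖ) = 0; ψ_{εₖ}((y^I_ₖ)ᵢ, (z^I_ₖ)ᵢ) = 0 for all i; and ∇f(xₖ) + [Σ_{j=1}^p (y^I_ₖ)_j ∇²c_j(xₖ) − AᵀA − Σ_{i=1}^p (1 − (z^I_ₖ)ᵢ/√((y^I_ₖ)ᵢ² + (z^I_ₖ)ᵢ² + 2εₖ²)) ∇c_i(xₖ)∇c_i(xₖ)ᵀ] λₖ = 0. Suppose (xₖ, yₖ, z^I_ₖ, λₖ) → (x*, y*, z^I*, λ*). Then, with β = {i : (y^I*)ᵢ = 0 = (z^I*)ᵢ} and γ = {i : (y^I*)ᵢ > 0 = (z^I*)ᵢ}, there exist reals ηᵢ ∈ [0,1] for i ∈ β such that ∇f(x*) + [Σ_{j=1}^p (y^I*)_j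 ∇²c_j(x*) − AᵀA − Σ_{i∈γ} ∇c_i(x*)∇c_i(x*)ᵀ − Σ_{i∈β} ηᵢ ∇c_i(x*)∇c_i(x*)ᵀ] λ* = 0, i.e., (x*, λ*) is an L-stationary pair. -/
open Filter Topology Matrix

/-- any limit of stationary points (with multipliers) of the smoothed
problems `P_{εₖ}` as `εₖ ↓ 0` is an L-stationary pair. -/
theorem smoothing_method_converges_to_L_stationary
    {n q p : ℕ} (A : Matrix (Fin q) (Fin n) ℝ) (b : Fin q → ℝ)
    (c : (Fin n → ℝ) → (Fin p → ℝ)) (hc : ContDiff ℝ 2 c)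
    (f : (Fin n → ℝ) → ℝ) (hf : ContDiff ℝ 1 f)
    -- `gf x` is the gradient of `f` at `x`
    (gf : (Fin n → ℝ) → (Fin n → ℝ))
    (hgf : ∀ x v, fderiv ℝ f x v = gf x ⬝ᵥ v)
    -- `Jc x` is the Jacobian of `c` at `x` (row `i` is the gradient of `c_i`)
    (Jc : (Fin n → ℝ) → Matrix (Fin p) (Fin n) ℝ)
    (hJc : ∀ x v, fderiv ℝ c x v = Jc x *ᵥ v)
    -- `Hc j x` is the Hessian of `c_j` at `x`
    (Hc : Fin p → (Fin n → ℝ) → Matrix (Fin n) (Fin n) ℝ)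
    (hHc : ∀ j x u, fderiv ℝ (fun y => Jc y j) x u = Hc j x *ᵥ u)
    (εk : ℕ → ℝ) (hεk : ∀ k, 0 < εk k) (hεk0 : Tendsto εk atTop (𝓝 0))
    (xk : ℕ → (Fin n → ℝ)) (yEk : ℕ → (Fin q → ℝ)) (yIk : ℕ → (Fin p → ℝ))
    (zIk : ℕ → (Fin p → ℝ)) (lk : ℕ → (Fin n → ℝ))
    -- feasibility for the smoothed problem: `G = 0`
    (hG1 : ∀ k, Aᵀ *ᵥ yEk k + (Jc (xk k))ᵀ *ᵥ yIk k = 0)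
    (hG2 : ∀ k, A *ᵥ xk k - b + yEk k = 0)
    (hG3 : ∀ k, c (xk k) + yIk k - zIk k = 0)
    -- smoothed Fischer–Burmeister equations
    (hFB : ∀ k i, yIk k i + zIk k i -
        Real.sqrt (yIk k i ^ 2 + zIk k i ^ 2 + 2 * εk k ^ 2) = 0)
    -- stationarity of the smoothed problem with multiplier `lk k`
    (hstat : ∀ k, gf (xk k) + ((∑ j : Fin p, yIk k j • Hc j (xk k)) - Aᵀ * A -
        ∑ i : Fin p, (1 - zIk k i /
            Real.sqrt (yIk k i ^ 2 + zIk k i ^ 2 + 2 * εk k ^ 2)) •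
          vecMulVec (Jc (xk k) i) (Jc (xk k) i)) *ᵥ lk k = 0)
    -- convergence of the whole sequence
    (x : Fin n → ℝ) (yE : Fin q → ℝ) (yI : Fin p → ℝ) (zI : Fin p → ℝ) (l : Fin n → ℝ)
    (hx : Tendsto xk atTop (𝓝 x)) (hyE : Tendsto yEk atTop (𝓝 yE))
    (hyI : Tendsto yIk atTop (𝓝 yI)) (hzI : Tendsto zIk atTop (𝓝 zI))
    (hl : Tendsto lk atTop (𝓝 l))
    (β γ : Finset (Fin p))
    (hβ : β = Finset.univ.filter (fun i => yI i = 0 ∧ zI i = 0))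
    (hγ : γ = Finset.univ.filter (fun i => 0 < yI i ∧ zI i = 0)) :
    ∃ η : Fin p → ℝ, (∀ i ∈ β, η i ∈ Set.Icc (0 : ℝ) 1) ∧
      gf x + ((∑ j : Fin p, yI j • Hc j x) - Aᵀ * A -
          (∑ i ∈ γ, vecMulVec (Jc x i) (Jc x i)) -
          ∑ i ∈ β, η i • vecMulVec (Jc x i) (Jc x i)) *ᵥ l = 0 := by
  classical
  -- the smoothing square root and the FB coefficients
  set Sq : ℕ → Fin p → ℝ :=
    fun k i => Real.sqrt (yIk k i ^ 2 + zIk k i ^ 2 + 2 * εk k ^ 2) with hSqdef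
  set T : ℕ → Fin p → ℝ := fun k i => 1 - zIk k i / Sq k i with hTdef
  have hSqpos : ∀ k i, 0 < Sq k i := by
    intro k i
    have h := hεk k
    exact Real.sqrt_pos.mpr (by positivity)
  have hsum : ∀ k i, yIk k i + zIk k i = Sq k i := by
    intro k i; have := hFB k i; simp only [hSqdef]; linarith
  have hSqsq : ∀ k i, Sq k i ^ 2 = yIk k i ^ 2 + zIk k i ^ 2 + 2 * εk k ^ 2 := by
    intro k i
    have h := hεk k
    exact Real.sq_sqrt (by positivity)
  have hprod : ∀ k i, yIk k i * zIk k i = εk k ^ 2 := by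
    intro k i
    have h1 := hSqsq k i
    have h2 := hsum k i
    have h3 : (yIk k i + zIk k i) ^ 2 = yIk k i ^ 2 + zIk k i ^ 2 + 2 * εk k ^ 2 := by
      rw [h2]; exact h1
    linear_combination h3 / 2
  have hypos : ∀ k i, 0 < yIk k i := by
    intro k i
    by_contra hy
    push_neg at hy
    have hz : 0 < zIk k i := by nlinarith [hsum k i, hSqpos k i]
    nlinarith [hprod k i, hεk k]
  have hzpos : ∀ k i, 0 < zIk k i := by
    intro k i
    by_contra hz
    push_neg at hz
    have hy : 0 < yIk k i := hypos k i
    nlinarith [hprod k i, hεk k]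
  have hT01 : ∀ k, T k ∈ Set.Icc (0 : Fin p → ℝ) 1 := by
    intro k
    constructor
    · intro i
      have hzs : zIk k i ≤ Sq k i := by nlinarith [hsum k i, hypos k i]
      have : zIk k i / Sq k i ≤ 1 := (div_le_one (hSqpos k i)).mpr hzs
      simp only [hTdef, Pi.zero_apply]
      linarith
    · intro i
      have : 0 < zIk k i / Sq k i := div_pos (hzpos k i) (hSqpos k i)
      simp only [hTdef, Pi.one_apply]
      linarith
  -- extract a subsequence along which the FB coefficients converge
  obtain ⟨η, hηmem, φ, hφ, hTφ⟩ := (isCompact_Icc).tendsto_subseq hT01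
  have hφtop : Tendsto φ atTop atTop := hφ.tendsto_atTop
  -- continuity of gf
  have hgfc : Continuous gf := by
    have h1 : Continuous (fderiv ℝ f) := hf.continuous_fderiv (by norm_num)
    have heq : gf = fun z => fun i => fderiv ℝ f z (Pi.single i 1) := by
      funext z i
      rw [hgf]; simp [dotProduct_single]
    rw [heq]
    exact continuous_pi fun i => h1.clm_apply continuous_const
  -- continuity of Jc
  have hJceq : ∀ z i j, Jc z i j = fderiv ℝ c z (Pi.single j 1) i := by
    intro z i j
    rw [hJc]; simp [Matrix.mulVec_single]
  have hJcc : Continuous Jc := by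
    have h1 : Continuous (fderiv ℝ c) := hc.continuous_fderiv (by norm_num)
    have : Continuous fun z => fun (i : Fin p) (j : Fin n) => fderiv ℝ c z (Pi.single j 1) i :=
      continuous_pi fun i => continuous_pi fun j =>
        (continuous_apply i).comp (h1.clm_apply continuous_const)
    have heq : Jc = fun z => fun (i : Fin p) (j : Fin n) => fderiv ℝ c z (Pi.single j 1) i := by
      funext z i j; exact hJceq z i j
    rw [heq]; exact this
  -- continuity of Hc
  have hcfd : ContDiff ℝ 1 (fderiv ℝ c) := hc.fderiv_right (by norm_num)
  have hgj : ∀ j : Fin p, ContDiff ℝ 1 (fun y => Jc y j) := by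
    intro j
    have heq : (fun y => Jc y j) = fun y => fun b => fderiv ℝ c y (Pi.single b 1) j := by
      funext y b; exact hJceq y j b
    rw [heq]
    apply contDiff_pi.mpr
    intro b
    exact (((ContinuousLinearMap.proj (R := ℝ) (φ := fun _ : Fin p => ℝ) j).comp
      (ContinuousLinearMap.apply ℝ (Fin p → ℝ) (Pi.single b 1))).contDiff).comp hcfd
  have hHcc : ∀ j, Continuous (Hc j) := by
    intro j
    have h1 : Continuous (fderiv ℝ (fun y => Jc y j)) := (hgj j).continuous_fderiv (by norm_num)
    have : Continuous fun z => fun (a b : Fin n) =>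
        fderiv ℝ (fun y => Jc y j) z (Pi.single b 1) a :=
      continuous_pi fun a => continuous_pi fun b =>
        (continuous_apply a).comp (h1.clm_apply continuous_const)
    have heq : Hc j = fun z => fun (a b : Fin n) =>
        fderiv ℝ (fun y => Jc y j) z (Pi.single b 1) a := by
      funext z a b; rw [hHc]; simp [Matrix.mulVec_single]
    rw [heq]; exact this
  -- limits of the composed sequences
  have hxgf : Tendsto (fun k => gf (xk k)) atTop (𝓝 (gf x)) := (hgfc.tendsto x).comp hx
  have hxJ : Tendsto (fun k => Jc (xk k)) atTop (𝓝 (Jc x)) := (hJcc.tendsto x).comp hx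
  have hxH : ∀ j, Tendsto (fun k => Hc j (xk k)) atTop (𝓝 (Hc j x)) :=
    fun j => ((hHcc j).tendsto x).comp hx
  have hyIi : ∀ i, Tendsto (fun k => yIk k i) atTop (𝓝 (yI i)) :=
    fun i => tendsto_pi_nhds.mp hyI i
  have hzIi : ∀ i, Tendsto (fun k => zIk k i) atTop (𝓝 (zI i)) :=
    fun i => tendsto_pi_nhds.mp hzI i
  -- limit of the square roots
  have hSqlim : ∀ i, Tendsto (fun k => Sq k i) atTop
      (𝓝 (Real.sqrt (yI i ^ 2 + zI i ^ 2))) := by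
    intro i
    have harg : Tendsto (fun k => yIk k i ^ 2 + zIk k i ^ 2 + 2 * εk k ^ 2) atTop
        (𝓝 (yI i ^ 2 + zI i ^ 2 + 2 * 0 ^ 2)) :=
      (((hyIi i).pow 2).add ((hzIi i).pow 2)).add ((hεk0.pow 2).const_mul 2)
    have := (Real.continuous_sqrt.tendsto _).comp harg
    simpa [Function.comp_def] using this
  -- limit of the FB equations
  have hFBlim : ∀ i, yI i + zI i = Real.sqrt (yI i ^ 2 + zI i ^ 2) := by
    intro i
    have h1 : Tendsto (fun k => yIk k i + zIk k i) atTop (𝓝 (yI i + zI i)) :=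
      (hyIi i).add (hzIi i)
    have h2 : (fun k => yIk k i + zIk k i) = fun k => Sq k i := funext fun k => hsum k i
    exact tendsto_nhds_unique h1 (h2 ▸ hSqlim i : Tendsto _ atTop _)
  have hyInn : ∀ i, 0 ≤ yI i := fun i => ge_of_tendsto' (hyIi i) (fun k => (hypos k i).le)
  have hzInn : ∀ i, 0 ≤ zI i := fun i => ge_of_tendsto' (hzIi i) (fun k => (hzpos k i).le)
  have hprod0 : ∀ i, yI i * zI i = 0 := by
    intro i
    have h1 := hFBlim i
    have h2 : (yI i + zI i) ^ 2 = yI i ^ 2 + zI i ^ 2 := by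
      rw [h1]; exact Real.sq_sqrt (by positivity)
    nlinarith
  -- componentwise limits of η
  have hηi : ∀ i, Tendsto (fun m => T (φ m) i) atTop (𝓝 (η i)) :=
    fun i => tendsto_pi_nhds.mp hTφ i
  -- for i ∈ γ, η i = 1
  have hηγ : ∀ i ∈ γ, η i = 1 := by
    intro i hi
    rw [hγ, Finset.mem_filter] at hi
    obtain ⟨-, hyipos, hzi0⟩ := hi
    have hden : Real.sqrt (yI i ^ 2 + zI i ^ 2) ≠ 0 := by
      rw [hzi0]; simp only [ne_eq]
      rw [Real.sqrt_eq_zero (by positivity)]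
      nlinarith
    have hdiv : Tendsto (fun k => zIk k i / Sq k i) atTop
        (𝓝 (zI i / Real.sqrt (yI i ^ 2 + zI i ^ 2))) := (hzIi i).div (hSqlim i) hden
    have hTi : Tendsto (fun k => T k i) atTop (𝓝 1) := by
      have := (tendsto_const_nhds : Tendsto (fun _ : ℕ => (1:ℝ)) atTop (𝓝 1)).sub hdiv
      simpa [hTdef, hzi0] using this
    exact tendsto_nhds_unique (hηi i) (hTi.comp hφtop)
  -- for i outside γ ∪ β, η i = 0
  have hηout : ∀ i, i ∉ γ → i ∉ β → η i = 0 := by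
    intro i hiγ hiβ
    rw [hγ, Finset.mem_filter] at hiγ
    rw [hβ, Finset.mem_filter] at hiβ
    push_neg at hiγ hiβ
    have hzi : 0 < zI i := by
      rcases lt_or_eq_of_le (hzInn i) with h | h
      · exact h
      · exfalso
        rcases lt_or_eq_of_le (hyInn i) with h2 | h2
        · exact (hiγ (Finset.mem_univ i) h2) h.symm
        · exact (hiβ (Finset.mem_univ i) h2.symm) h.symm
    have hyi : yI i = 0 := by
      have := hprod0 i
      rcases mul_eq_zero.mp this with h | h
      · exact h
      · exact absurd h (ne_of_gt hzi)
    have hsq : Real.sqrt (yI i ^ 2 + zI i ^ 2) = zI i := by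
      rw [hyi]; simpa using Real.sqrt_sq hzi.le
    have hden : Real.sqrt (yI i ^ 2 + zI i ^ 2) ≠ 0 := by rw [hsq]; exact ne_of_gt hzi
    have hdiv : Tendsto (fun k => zIk k i / Sq k i) atTop
        (𝓝 (zI i / Real.sqrt (yI i ^ 2 + zI i ^ 2))) := (hzIi i).div (hSqlim i) hden
    have hTi : Tendsto (fun k => T k i) atTop (𝓝 0) := by
      have := (tendsto_const_nhds : Tendsto (fun _ : ℕ => (1:ℝ)) atTop (𝓝 1)).sub hdiv
      have heq : (1 : ℝ) - zI i / Real.sqrt (yI i ^ 2 + zI i ^ 2) = 0 := by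
        rw [hsq, div_self (ne_of_gt hzi)]; ring
      simpa [hTdef, heq] using this
    exact tendsto_nhds_unique (hηi i) (hTi.comp hφtop)
  -- limit matrices
  set M : ℕ → Matrix (Fin n) (Fin n) ℝ := fun k =>
    (∑ j : Fin p, yIk k j • Hc j (xk k)) - Aᵀ * A -
      ∑ i : Fin p, T k i • vecMulVec (Jc (xk k) i) (Jc (xk k) i) with hMdef
  set M0 : Matrix (Fin n) (Fin n) ℝ :=
    (∑ j : Fin p, yI j • Hc j x) - Aᵀ * A -
      ∑ i : Fin p, η i • vecMulVec (Jc x i) (Jc x i) with hM0def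
  have hvv : ∀ i : Fin p, Tendsto (fun m => vecMulVec (Jc (xk (φ m)) i) (Jc (xk (φ m)) i))
      atTop (𝓝 (vecMulVec (Jc x i) (Jc x i))) := by
    intro i
    refine tendsto_pi_nhds.mpr ?_
    intro a
    rw [tendsto_pi_nhds]
    intro b
    have hA : Tendsto (fun m => Jc (xk (φ m)) i a) atTop (𝓝 (Jc x i a)) :=
      (tendsto_pi_nhds.mp (tendsto_pi_nhds.mp (hxJ.comp hφtop) i) a)
    have hB : Tendsto (fun m => Jc (xk (φ m)) i b) atTop (𝓝 (Jc x i b)) :=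
      (tendsto_pi_nhds.mp (tendsto_pi_nhds.mp (hxJ.comp hφtop) i) b)
    simpa [vecMulVec_apply] using hA.mul hB
  have hMlim : Tendsto (fun m => M (φ m)) atTop (𝓝 M0) := by
    apply Tendsto.sub
    apply Tendsto.sub
    · exact tendsto_finset_sum _ fun j _ =>
        ((hyIi j).comp hφtop).smul ((hxH j).comp hφtop)
    · exact tendsto_const_nhds
    · exact tendsto_finset_sum _ fun i _ => (hηi i).smul (hvv i)
  have hmv : Tendsto (fun m => M (φ m) *ᵥ lk (φ m)) atTop (𝓝 (M0 *ᵥ l)) := by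
    rw [tendsto_pi_nhds]
    intro a
    simp only [Matrix.mulVec, dotProduct]
    apply tendsto_finset_sum
    intro b _
    exact (tendsto_pi_nhds.mp (tendsto_pi_nhds.mp hMlim a) b).mul
      (tendsto_pi_nhds.mp (hl.comp hφtop) b)
  have hmain : Tendsto (fun m => gf (xk (φ m)) + M (φ m) *ᵥ lk (φ m)) atTop
      (𝓝 (gf x + M0 *ᵥ l)) := (hxgf.comp hφtop).add hmv
  have hzeroeq : (fun m => gf (xk (φ m)) + M (φ m) *ᵥ lk (φ m)) =
      fun _ => (0 : Fin n → ℝ) := funext fun m => hstat (φ m)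
  have hfinal : gf x + M0 *ᵥ l = 0 :=
    tendsto_nhds_unique (hzeroeq ▸ hmain) tendsto_const_nhds
  -- split the sum over η
  have hdis : Disjoint γ β := by
    rw [hγ, hβ, Finset.disjoint_filter]
    rintro i - ⟨h1, -⟩ ⟨h2, -⟩
    exact absurd h2 (ne_of_gt h1)
  have hsplit : (∑ i : Fin p, η i • vecMulVec (Jc x i) (Jc x i)) =
      (∑ i ∈ γ, vecMulVec (Jc x i) (Jc x i)) +
        ∑ i ∈ β, η i • vecMulVec (Jc x i) (Jc x i) := by
    have h1 : (∑ i ∈ γ ∪ β, η i • vecMulVec (Jc x i) (Jc x i)) =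
        ∑ i : Fin p, η i • vecMulVec (Jc x i) (Jc x i) :=
      Finset.sum_subset (Finset.subset_univ _) (fun i _ hi => by
        rw [Finset.mem_union] at hi
        push_neg at hi
        rw [hηout i hi.1 hi.2, zero_smul])
    rw [← h1, Finset.sum_union hdis]
    congr 1
    exact Finset.sum_congr rfl fun i hi => by rw [hηγ i hi, one_smul]
  refine ⟨η, fun i _ => ⟨hηmem.1 i, hηmem.2 i⟩, ?_⟩
  have hM0eq : ((∑ j : Fin p, yI j • Hc j x) - Aᵀ * A -
      (∑ i ∈ γ, vecMulVec (Jc x i) (Jc x i)) -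
      ∑ i ∈ β, η i • vecMulVec (Jc x i) (Jc x i)) = M0 := by
    rw [hM0def, hsplit, sub_add_eq_sub_sub]
  rw [hM0eq]
  exact hfinal
end
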